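/- Let A be a BL-algebra. For every x ∈ A and every y ∈ A with ¬¬y = y, one has x → y = ¬¬x → y. (Equivalently, the split epimorphism p : A → MV(A), p(a) = ¬¬a, onto the subalgebra MV(A) = {a ∈ A | ¬¬a = a} of regular elements has a strong section given by the inclusion of MV(A) into A.) -/
import Mathlib


/-- A BL-algebra: a bounded commutative integral residuated lattice satisfying
divisibility and prelinearity. The bottom element is `0` and the top element is `1`. -/
class BLAlgebra (α : Type*) extends Lattice α, CommMonoid α, HImp α, Zero α where
  zero_le : ∀ x : α, (0 : α) ≤ x
  le_one : ∀ x : α, x ≤ 1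
  residuation : ∀ x y z : α, x * y ≤ z ↔ x ≤ y ⇨ z
  divisibility : ∀ x y : α, x ⊓ y = x * (x ⇨ y)
  prelinearity : ∀ x y : α, (x ⇨ y) ⊔ (y ⇨ x) = 1

section Aux
variable {A : Type*} [BLAlgebra A]

private lemma bl_res {x y z : A} : x * y ≤ z ↔ x ≤ y ⇨ z := BLAlgebra.residuation x y z

private lemma bl_mp (x y : A) : (x ⇨ y) * x ≤ y := bl_res.mpr le_rfl

private lemma bl_mul_le_mul_right {a b : A} (h : a ≤ b) (c : A) : a * c ≤ b * c :=
  bl_res.mpr (h.trans (bl_res.mp le_rfl))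

/-- Exchange: `a ⇨ ¬b = b ⇨ ¬a`. -/
private lemma bl_swap (a b : A) : a ⇨ (b ⇨ (0 : A)) = b ⇨ (a ⇨ (0 : A)) := by
  have key : ∀ a b : A, a ⇨ (b ⇨ (0 : A)) ≤ b ⇨ (a ⇨ (0 : A)) := by
    intro a b
    apply bl_res.mp
    apply bl_res.mp
    calc (a ⇨ (b ⇨ (0 : A))) * b * a = (a ⇨ (b ⇨ (0 : A))) * a * b := by
          rw [mul_assoc, mul_comm b a, mul_assoc]
      _ ≤ (b ⇨ (0 : A)) * b := bl_mul_le_mul_right (bl_mp a (b ⇨ (0 : A))) b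
      _ ≤ 0 := bl_mp b 0
  exact le_antisymm (key a b) (key b a)

private lemma bl_le_negneg (a : A) : a ≤ (a ⇨ (0 : A)) ⇨ (0 : A) := by
  apply bl_res.mp
  rw [mul_comm]
  exact bl_mp a 0

private lemma bl_himp_anti {a b : A} (h : a ≤ b) (c : A) : b ⇨ c ≤ a ⇨ c := by
  apply bl_res.mp
  calc (b ⇨ c) * a ≤ (b ⇨ c) * b := by
        rw [mul_comm (b ⇨ c) a, mul_comm (b ⇨ c) b]
        exact bl_mul_le_mul_right h _
    _ ≤ c := bl_mp b c

private lemma bl_triple_neg (a : A) :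
    (((a ⇨ (0 : A)) ⇨ (0 : A)) ⇨ (0 : A)) = a ⇨ (0 : A) :=
  le_antisymm (bl_himp_anti (bl_le_negneg a) 0) (bl_le_negneg (a ⇨ (0 : A)))

end Aux

/-- In a BL-algebra, for every `x` and every regular element `y` (i.e. `¬¬y = y`) one has
`x → y = ¬¬x → y`, where `¬a := a → 0`; i.e. the split epimorphism `a ↦ ¬¬a` onto the
MV-subalgebra of regular elements has strong section. -/
theorem stmt5 {A : Type*} [BLAlgebra A] (x y : A)
    (hy : (y ⇨ (0 : A)) ⇨ (0 : A) = y) :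
    x ⇨ y = ((x ⇨ (0 : A)) ⇨ (0 : A)) ⇨ y := by
  conv_lhs => rw [← hy]
  conv_rhs => rw [← hy]
  rw [bl_swap x (y ⇨ (0 : A)), bl_swap ((x ⇨ (0 : A)) ⇨ (0 : A)) (y ⇨ (0 : A)),
    bl_triple_neg x]
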